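/- Let A : [0,1]² → [0,1] be an aggregation function, and let 𝔏(Â) and 𝔏(Â^d) denote the least width-limiting functions of the best interval representations Â and Â^d respectively, where 𝔏(IF)(ε, δ) = sup{ w(IF([u, u+ε], [v, v+δ])) : u ∈ [0, 1−ε], v ∈ [0, 1−δ] }. Then 𝔏(Â) = 𝔏(Â^d) = A^d (pointwise equality of functions on [0,1]²) if and only if A is a (1,1)-ultramodular aggregation function. -/

import Mathlib

open Set

noncomputable section

structure IV : Type where
  lo : ℝ
  hi : ℝ
  lo_mem : lo ∈ Set.Icc (0:ℝ) 1
  hi_mem : hi ∈ Set.Icc (0:ℝ) 1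
  lo_le_hi : lo ≤ hi

namespace IV

/-- The width of an interval. -/
def w (X : IV) : ℝ := X.hi - X.lo

/-- The product (componentwise) order on intervals. -/
def lePr (X Y : IV) : Prop := X.lo ≤ Y.lo ∧ X.hi ≤ Y.hi

end IV

/-- `F` maps `[0,1]²` into `[0,1]`. -/
def MapsIcc (F : ℝ → ℝ → ℝ) : Prop :=
  ∀ x ∈ Set.Icc (0:ℝ) 1, ∀ y ∈ Set.Icc (0:ℝ) 1, F x y ∈ Set.Icc (0:ℝ) 1

/-- `F` is increasing in each argument on `[0,1]²`. -/
def IncrIcc (F : ℝ → ℝ → ℝ) : Prop :=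
  ∀ x₁ ∈ Set.Icc (0:ℝ) 1, ∀ x₂ ∈ Set.Icc (0:ℝ) 1, ∀ y₁ ∈ Set.Icc (0:ℝ) 1, ∀ y₂ ∈ Set.Icc (0:ℝ) 1,
    x₁ ≤ x₂ → y₁ ≤ y₂ → F x₁ y₁ ≤ F x₂ y₂

/-- Aggregation function on `[0,1]²`. -/
def IsAggregation (A : ℝ → ℝ → ℝ) : Prop :=
  MapsIcc A ∧ IncrIcc A ∧ A 0 0 = 0 ∧ A 1 1 = 1

/-- The dual of a function with respect to the Zadeh negation. -/
def dualF (F : ℝ → ℝ → ℝ) : ℝ → ℝ → ℝ := fun x y => 1 - F (1 - x) (1 - y)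

/-- Ultramodularity of a bivariate function on `[0,1]²`. -/
def Ultramodular (A : ℝ → ℝ → ℝ) : Prop :=
  ∀ x₁ ∈ Set.Icc (0:ℝ) 1, ∀ x₂ ∈ Set.Icc (0:ℝ) 1, ∀ y₁ ∈ Set.Icc (0:ℝ) 1, ∀ y₂ ∈ Set.Icc (0:ℝ) 1,
    ∀ ε ∈ Set.Icc (0:ℝ) 1, ∀ δ ∈ Set.Icc (0:ℝ) 1,
      x₂ + ε ∈ Set.Icc (0:ℝ) 1 → y₂ + δ ∈ Set.Icc (0:ℝ) 1 → x₁ ≤ x₂ → y₁ ≤ y₂ →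
        A (x₁ + ε) (y₁ + δ) - A x₁ y₁ ≤ A (x₂ + ε) (y₂ + δ) - A x₂ y₂

/-- `(a,b)`-ultramodularity of a bivariate function on `[0,1]²`. -/
def ABUltramodular (A : ℝ → ℝ → ℝ) (a b : ℝ) : Prop :=
  ∀ x ∈ Set.Icc (0:ℝ) 1, ∀ y ∈ Set.Icc (0:ℝ) 1, ∀ ε ∈ Set.Icc (0:ℝ) 1, ∀ δ ∈ Set.Icc (0:ℝ) 1,
    x + ε ∈ Set.Icc (0:ℝ) 1 → y + δ ∈ Set.Icc (0:ℝ) 1 →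
    a - ε ∈ Set.Icc (0:ℝ) 1 → b - δ ∈ Set.Icc (0:ℝ) 1 →
      A (x + ε) (y + δ) - A x y ≤ A a b - A (a - ε) (b - δ)

/-- `𝔏(IF)(ε,δ)`: the supremum of the widths `w(IF(X,Y))` over all intervals `X` of width `ε`
and `Y` of width `δ` (which are exactly the intervals `[u,u+ε]`, `u ∈ [0,1-ε]`, and
`[v,v+δ]`, `v ∈ [0,1-δ]`). -/
def Lwl (IF : IV → IV → IV) (ε δ : ℝ) : ℝ :=
  sSup {t : ℝ | ∃ X Y : IV, X.w = ε ∧ Y.w = δ ∧ t = (IF X Y).w}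

/-- `IF` is width-limited by `B`. -/
def WidthLimited (IF : IV → IV → IV) (B : ℝ → ℝ → ℝ) : Prop :=
  ∀ X Y : IV, (IF X Y).w ≤ B X.w Y.w

/-- Overlap function on `[0,1]²`. -/
def IsOverlap (O : ℝ → ℝ → ℝ) : Prop :=
  MapsIcc O ∧
  (∀ x ∈ Set.Icc (0:ℝ) 1, ∀ y ∈ Set.Icc (0:ℝ) 1, O x y = O y x) ∧
  (∀ x ∈ Set.Icc (0:ℝ) 1, ∀ y ∈ Set.Icc (0:ℝ) 1, (O x y = 0 ↔ x * y = 0)) ∧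
  (∀ x ∈ Set.Icc (0:ℝ) 1, ∀ y ∈ Set.Icc (0:ℝ) 1, (O x y = 1 ↔ x * y = 1)) ∧
  IncrIcc O ∧
  ContinuousOn (fun p : ℝ × ℝ => O p.1 p.2) (Set.Icc (0:ℝ) 1 ×ˢ Set.Icc (0:ℝ) 1)

/-- Strict overlap function. -/
def IsStrictOverlap (O : ℝ → ℝ → ℝ) : Prop :=
  IsOverlap O ∧
  ∀ x ∈ Set.Ioc (0:ℝ) 1, ∀ y ∈ Set.Ioc (0:ℝ) 1, ∀ z ∈ Set.Ioc (0:ℝ) 1, (x < y ↔ O x z < O y z)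

/-- `K_α(x,y) = x + α (y - x)`. -/
def Kab (α x y : ℝ) : ℝ := x + α * (y - x)

/-- `K_α` of an interval: `K_α(X) = K_α(X⁻, X⁺)`. -/
def KI (α : ℝ) (X : IV) : ℝ := X.lo + α * (X.hi - X.lo)

/-- The admissible order `≤_{α,β}` generated by `(K_α, K_β)`. -/
def leAB (α β : ℝ) (X Y : IV) : Prop :=
  KI α X < KI α Y ∨ (KI α X = KI α Y ∧ KI β X ≤ KI β Y)

/-- Width-limited interval-valued overlap function with respect to `(le1, le2, B)`. -/
def IsWIVOverlap (IOw : IV → IV → IV) (le1 le2 : IV → IV → Prop) (B : ℝ → ℝ → ℝ) : Prop :=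
  (∀ X Y : IV, IOw X Y = IOw Y X) ∧
  (∀ X Y : IV, ((IOw X Y).lo = 0 ∧ (IOw X Y).hi = 0) ↔ (X.lo * Y.lo = 0 ∧ X.hi * Y.hi = 0)) ∧
  (∀ X Y : IV, ((IOw X Y).lo = 1 ∧ (IOw X Y).hi = 1) ↔ (X.lo * Y.lo = 1 ∧ X.hi * Y.hi = 1)) ∧
  (∀ X₁ X₂ Y₁ Y₂ : IV, le1 X₁ X₂ → le1 Y₁ Y₂ → le2 (IOw X₁ Y₁) (IOw X₂ Y₂)) ∧
  (∀ X Y : IV, (IOw X Y).w ≤ B X.w Y.w)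

/-- `d_α(c)`: the maximal possible width of an interval `Z` with `K_α(Z) = c`. -/
def dmax (α c : ℝ) : ℝ := min (c / α) ((1 - c) / (1 - α))

/-- `λ_α(X) = w(X) / d_α(K_α(X))`, with the convention `0/0 = 1`. -/
def lam (α : ℝ) (X : IV) : ℝ :=
  if dmax α (KI α X) = 0 then 1 else X.w / dmax α (KI α X)

private lemma bdd_aux (G : ℝ → ℝ → ℝ) (hG : MapsIcc G) (IF : IV → IV → IV)
    (hIF : ∀ X Y : IV, (IF X Y).lo = G X.lo Y.lo ∧ (IF X Y).hi = G X.hi Y.hi)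
    (ε δ : ℝ) :
    BddAbove {t : ℝ | ∃ X Y : IV, X.w = ε ∧ Y.w = δ ∧ t = (IF X Y).w} := by
  refine ⟨1, ?_⟩
  rintro t ⟨X, Y, _, _, rfl⟩
  have h1 := hG X.hi X.hi_mem Y.hi Y.hi_mem
  have h2 := hG X.lo X.lo_mem Y.lo Y.lo_mem
  simp only [Set.mem_Icc] at h1 h2
  simp only [IV.w, (hIF X Y).1, (hIF X Y).2]
  linarith

theorem statement5 (A : ℝ → ℝ → ℝ) (hA : IsAggregation A)
    (IA IAd : IV → IV → IV)
    (hIA : ∀ X Y : IV, (IA X Y).lo = A X.lo Y.lo ∧ (IA X Y).hi = A X.hi Y.hi)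
    (hIAd : ∀ X Y : IV,
      (IAd X Y).lo = dualF A X.lo Y.lo ∧ (IAd X Y).hi = dualF A X.hi Y.hi) :
    (∀ ε ∈ Set.Icc (0:ℝ) 1, ∀ δ ∈ Set.Icc (0:ℝ) 1,
        Lwl IA ε δ = dualF A ε δ ∧ Lwl IAd ε δ = dualF A ε δ) ↔
      ABUltramodular A 1 1 := by
  obtain ⟨hmap, hmono, h00, h11⟩ := hA
  have hmapd : MapsIcc (dualF A) := by
    intro x hx y hy
    simp only [Set.mem_Icc] at hx hy ⊢
    have := hmap (1 - x) (Set.mem_Icc.mpr ⟨by linarith, by linarith⟩)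
      (1 - y) (Set.mem_Icc.mpr ⟨by linarith, by linarith⟩)
    simp only [Set.mem_Icc] at this
    unfold dualF
    constructor <;> linarith [this.1, this.2]
  constructor
  · -- forward
    intro h x hx y hy ε hε δ hδ hxε hyδ h1ε h1δ
    have key := (h ε hε δ hδ).1
    have hle1 : (0:ℝ) ≤ ε := (Set.mem_Icc.mp hε).1
    have hle2 : (0:ℝ) ≤ δ := (Set.mem_Icc.mp hδ).1
    set X : IV := ⟨x, x + ε, hx, hxε, by linarith⟩ with hX
    set Y : IV := ⟨y, y + δ, hy, hyδ, by linarith⟩ with hY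
    have hmem : A (x + ε) (y + δ) - A x y ∈
        {t : ℝ | ∃ X Y : IV, X.w = ε ∧ Y.w = δ ∧ t = (IA X Y).w} := by
      refine ⟨X, Y, ?_, ?_, ?_⟩
      · show x + ε - x = ε; ring
      · show y + δ - y = δ; ring
      · exact (congrArg₂ HSub.hSub (hIA X Y).2 (hIA X Y).1).symm
    have hle := le_csSup (bdd_aux A hmap IA hIA ε δ) hmem
    rw [Lwl] at key
    rw [key] at hle
    unfold dualF at hle
    rw [h11]
    linarith
  · -- backward
    intro hU ε hε δ hδ
    have hε' := Set.mem_Icc.mp hε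
    have hδ' := Set.mem_Icc.mp hδ
    have h1e : (1:ℝ) - ε ∈ Set.Icc (0:ℝ) 1 := Set.mem_Icc.mpr ⟨by linarith, by linarith⟩
    have h1d : (1:ℝ) - δ ∈ Set.Icc (0:ℝ) 1 := Set.mem_Icc.mpr ⟨by linarith, by linarith⟩
    constructor
    · apply le_antisymm
      · apply csSup_le
        · -- nonempty
          refine ⟨_, ⟨1 - ε, 1, h1e, Set.mem_Icc.mpr ⟨zero_le_one, le_refl 1⟩, by linarith⟩,
            ⟨1 - δ, 1, h1d, Set.mem_Icc.mpr ⟨zero_le_one, le_refl 1⟩, by linarith⟩, ?_, ?_, rfl⟩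
          · show 1 - (1 - ε) = ε; ring
          · show 1 - (1 - δ) = δ; ring
        · rintro t ⟨X, Y, hXw, hYw, rfl⟩
          simp only [IV.w] at hXw hYw
          have e1 : X.lo + ε = X.hi := by linarith
          have e2 : Y.lo + δ = Y.hi := by linarith
          have key := hU X.lo X.lo_mem Y.lo Y.lo_mem ε hε δ hδ
            (by rw [e1]; exact X.hi_mem) (by rw [e2]; exact Y.hi_mem) h1e h1d
          rw [e1, e2] at key
          simp only [IV.w, (hIA X Y).1, (hIA X Y).2]
          unfold dualF
          rw [h11] at key
          linarith
      · refine le_csSup (bdd_aux A hmap IA hIA ε δ) ?_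
        refine ⟨⟨1 - ε, 1, h1e, Set.mem_Icc.mpr ⟨zero_le_one, le_refl 1⟩, by linarith⟩,
          ⟨1 - δ, 1, h1d, Set.mem_Icc.mpr ⟨zero_le_one, le_refl 1⟩, by linarith⟩, ?_, ?_, ?_⟩
        · show 1 - (1 - ε) = ε; ring
        · show 1 - (1 - δ) = δ; ring
        · simp only [IV.w, (hIA _ _).1, (hIA _ _).2]
          unfold dualF
          rw [h11]
    · apply le_antisymm
      · apply csSup_le
        · refine ⟨_, ⟨0, ε, Set.mem_Icc.mpr ⟨le_refl 0, zero_le_one⟩, hε, hε'.1⟩,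
            ⟨0, δ, Set.mem_Icc.mpr ⟨le_refl 0, zero_le_one⟩, hδ, hδ'.1⟩, ?_, ?_, rfl⟩
          · show ε - 0 = ε; ring
          · show δ - 0 = δ; ring
        · rintro t ⟨X, Y, hXw, hYw, rfl⟩
          simp only [IV.w] at hXw hYw
          have hXhi := Set.mem_Icc.mp X.hi_mem
          have hYhi := Set.mem_Icc.mp Y.hi_mem
          have hXlo := Set.mem_Icc.mp X.lo_mem
          have hYlo := Set.mem_Icc.mp Y.lo_mem
          have key := hU (1 - X.hi) (Set.mem_Icc.mpr ⟨by linarith, by linarith⟩)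
            (1 - Y.hi) (Set.mem_Icc.mpr ⟨by linarith, by linarith⟩) ε hε δ hδ
            (by rw [show 1 - X.hi + ε = 1 - X.lo by linarith]
                exact Set.mem_Icc.mpr ⟨by linarith, by linarith⟩)
            (by rw [show 1 - Y.hi + δ = 1 - Y.lo by linarith]
                exact Set.mem_Icc.mpr ⟨by linarith, by linarith⟩) h1e h1d
          rw [show 1 - X.hi + ε = 1 - X.lo by linarith,
              show 1 - Y.hi + δ = 1 - Y.lo by linarith] at key
          simp only [IV.w, (hIAd X Y).1, (hIAd X Y).2]
          unfold dualF
          rw [h11] at key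
          linarith
      · refine le_csSup (bdd_aux (dualF A) hmapd IAd hIAd ε δ) ?_
        refine ⟨⟨0, ε, Set.mem_Icc.mpr ⟨le_refl 0, zero_le_one⟩, hε, hε'.1⟩,
          ⟨0, δ, Set.mem_Icc.mpr ⟨le_refl 0, zero_le_one⟩, hδ, hδ'.1⟩, ?_, ?_, ?_⟩
        · show ε - 0 = ε; ring
        · show δ - 0 = δ; ring
        · simp only [IV.w, (hIAd _ _).1, (hIAd _ _).2]
          unfold dualF
          norm_num [h11]
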